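/- Let s ≥ 2 be an integer and M an n-vertex standard multigraph with δ(M) ≥ 2(1 − 1/(s−1) − α)n. Let U ⊆ V(M) satisfy |U| ≥ (2/(s−1) − β)n and suppose no three vertices of U span five or more edges of M (counted with multiplicity). Then every u ∈ U satisfies d_H(u, V∖U) ≥ |V∖U| − (4α + 2β)n, where H is the graph of heavy edges of M. -/
import Mathlib


open Finset

/-- A standard multigraph: loop-free, with every pair of vertices joined by
at most two parallel edges (`μ` is the symmetric multiplicity function). -/
structure StdMultigraph (V : Type*) where
  μ : V → V → ℕ
  symm : ∀ u v, μ u v = μ v u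
  loopless : ∀ v, μ v v = 0
  le_two : ∀ u v, μ u v ≤ 2

/-- In a standard multigraph with `δ(M) ≥ 2(1 - 1/(s-1) - α)n`,
if `U` has size at least `(2/(s-1) - β)n` and no three (distinct) vertices of `U`
span five or more edges, then every `u ∈ U` has at least `|V∖U| - (4α+2β)n` heavy
neighbors outside `U`. -/
theorem stmt_6 {V : Type*} [Fintype V] [DecidableEq V] (s : ℕ) (hs : 2 ≤ s)
    (α β : ℝ) (hα0 : 0 < α) (hα1 : α < 1) (hβ0 : 0 < β) (hβ1 : β < 1)
    (M : StdMultigraph V) (n : ℕ) (hn : Fintype.card V = n)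
    (hδ : ∀ v : V, 2 * (1 - 1 / ((s : ℝ) - 1) - α) * (n : ℝ) ≤ ∑ u : V, (M.μ v u : ℝ))
    (U : Finset V)
    (htriple : ∀ x ∈ U, ∀ y ∈ U, ∀ z ∈ U, x ≠ y → y ≠ z → x ≠ z →
      M.μ x y + M.μ y z + M.μ x z ≤ 4)
    (hU : (2 / ((s : ℝ) - 1) - β) * (n : ℝ) ≤ U.card) :
    ∀ u ∈ U, ((Uᶜ : Finset V).card : ℝ) - (4 * α + 2 * β) * n ≤
      (((Uᶜ : Finset V).filter (fun w => M.μ u w = 2)).card : ℝ) := by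
  intro u hu
  -- notation
  have hUn : U.card ≤ n := by
    rw [← hn, ← Finset.card_univ]; exact Finset.card_le_univ U
  have hcardc : ((Uᶜ : Finset V).card : ℝ) = (n : ℝ) - U.card := by
    rw [Finset.card_compl, hn, Nat.cast_sub hUn]
  -- split the degree of u
  have hsplitu : (∑ v : V, (M.μ u v : ℝ)) =
      (∑ v ∈ U, (M.μ u v : ℝ)) + (∑ v ∈ Uᶜ, (M.μ u v : ℝ)) :=
    (Finset.sum_add_sum_compl U _).symm
  -- heavy-neighbor count bound: d(u, Uᶜ) ≤ |Uᶜ| + d_H(u, Uᶜ)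
  have hE : (∑ v ∈ Uᶜ, (M.μ u v : ℝ)) ≤ ((Uᶜ : Finset V).card : ℝ) +
      (((Uᶜ : Finset V).filter (fun w => M.μ u w = 2)).card : ℝ) := by
    have hNat : (∑ v ∈ Uᶜ, M.μ u v) ≤ (Uᶜ : Finset V).card +
        ((Uᶜ : Finset V).filter (fun w => M.μ u w = 2)).card := by
      rw [Finset.card_filter]
      calc (∑ v ∈ Uᶜ, M.μ u v)
          ≤ ∑ v ∈ Uᶜ, (1 + if M.μ u v = 2 then 1 else 0) := by
            apply Finset.sum_le_sum
            intro w _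
            have := M.le_two u w
            by_cases h2 : M.μ u w = 2
            · simp [h2]
            · simp [h2]; omega
        _ = (Uᶜ : Finset V).card + ∑ v ∈ Uᶜ, (if M.μ u v = 2 then 1 else 0) := by
            rw [Finset.sum_add_distrib, Finset.sum_const, smul_eq_mul, mul_one]
    calc (∑ v ∈ Uᶜ, (M.μ u v : ℝ)) = ((∑ v ∈ Uᶜ, M.μ u v : ℕ) : ℝ) := by
            push_cast; ring
      _ ≤ _ := by exact_mod_cast hNat
  -- bound d(u, U)
  have hD : (∑ v ∈ U, (M.μ u v : ℝ)) ≤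
      2 * (U.card : ℝ) - (2 * (1 - 1 / ((s : ℝ) - 1) - α) * n - 2 * ((n:ℝ) - U.card)) ∨
      (∑ v ∈ U, (M.μ u v : ℝ)) ≤ (U.card : ℝ) := by
    by_cases hx : ∃ x ∈ U, M.μ u x = 2
    · left
      obtain ⟨x, hxU, hux⟩ := hx
      have hne : u ≠ x := by
        intro h; rw [h, M.loopless] at hux; exact two_ne_zero hux.symm
      -- pointwise: for all y ∈ U, μ x y + μ u y ≤ 2
      have hpt : ∀ y ∈ U, M.μ x y + M.μ u y ≤ 2 := by
        intro y hy
        by_cases hyu : y = u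
        · subst hyu
          have := M.symm x y
          rw [M.loopless]
          omega
        by_cases hyx : y = x
        · subst hyx
          rw [M.loopless]
          have := M.symm u y
          omega
        · have := htriple u hu x hxU y hy hne (Ne.symm hyx) (Ne.symm hyu)
          have h1 := M.symm u x
          have h2 := M.symm x y
          omega
      have hkey : (∑ y ∈ U, M.μ x y) + (∑ y ∈ U, M.μ u y) ≤ 2 * U.card := by
        rw [← Finset.sum_add_distrib]
        calc (∑ y ∈ U, (M.μ x y + M.μ u y)) ≤ ∑ _y ∈ U, 2 :=
              Finset.sum_le_sum hpt
          _ = 2 * U.card := by rw [Finset.sum_const]; ring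
      have hkeyR : (∑ y ∈ U, (M.μ x y : ℝ)) + (∑ y ∈ U, (M.μ u y : ℝ)) ≤
          2 * (U.card : ℝ) := by
        have := hkey
        push_cast [← Nat.cast_sum] at this ⊢
        exact_mod_cast hkey
      -- degree of x
      have hdx := hδ x
      have hsplitx : (∑ v : V, (M.μ x v : ℝ)) =
          (∑ v ∈ U, (M.μ x v : ℝ)) + (∑ v ∈ Uᶜ, (M.μ x v : ℝ)) :=
        (Finset.sum_add_sum_compl U _).symm
      have hxc : (∑ v ∈ Uᶜ, (M.μ x v : ℝ)) ≤ 2 * ((n:ℝ) - U.card) := by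
        have : (∑ v ∈ Uᶜ, (M.μ x v : ℝ)) ≤ ∑ _v ∈ Uᶜ, (2:ℝ) := by
          apply Finset.sum_le_sum
          intro w _
          exact_mod_cast M.le_two x w
        rw [Finset.sum_const, nsmul_eq_mul] at this
        rw [← hcardc]
        linarith
      linarith
    · right
      push_neg at hx
      have : (∑ v ∈ U, (M.μ u v : ℝ)) ≤ ∑ _v ∈ U, (1:ℝ) := by
        apply Finset.sum_le_sum
        intro y hy
        have h2 := M.le_two u y
        have := hx y hy
        have : M.μ u y ≤ 1 := by omega
        exact_mod_cast this
      rw [Finset.sum_const, nsmul_eq_mul, mul_one] at this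
      exact this
  -- finish with linear arithmetic
  have hdu := hδ u
  have hn0 : (0:ℝ) ≤ (n:ℝ) := Nat.cast_nonneg n
  have ht : 2 / ((s : ℝ) - 1) = 2 * (1 / ((s : ℝ) - 1)) := by ring
  rw [ht] at hU
  rw [hsplitu] at hdu
  rcases hD with hD | hD
  · rw [hcardc]
    nlinarith [hE, hU, hdu, hD, hn0]
  · rw [hcardc]
    nlinarith [hE, hU, hdu, hD, hn0]
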